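/- Let (F,G) be a WZ pair: F(n+1,k) - F(n,k) = G(n,k+1) - G(n,k) for all n,k ≥ 0, and let s ≥ 1 be an integer. Suppose all relevant series and limits converge. Then Σ_{n=0}^∞ G(n,0) = Σ_{n=0}^∞ [ F(s(n+1), n) + Σ_{i=0}^{s-1} G(sn+i, n) ] − lim_{n→∞} Σ_{k=0}^{n-1} F(sn, k). -/

import Mathlib

open Finset Filter

lemma wz_key (F G : ℕ → ℕ → ℝ)
    (hWZ : ∀ n k, F (n + 1) k - F n k = G n (k + 1) - G n k)
    (s : ℕ) : ∀ N : ℕ,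
    ∑ n ∈ range N, (F (s * (n + 1)) n + ∑ i ∈ range s, G (s * n + i) n)
      = (∑ m ∈ range (s * N), G m 0) + ∑ k ∈ range N, F (s * N) k := by
  intro N
  induction N with
  | zero => simp
  | succ N ih =>
    have h1 : ∑ m ∈ range (s * (N + 1)), G m 0
        = ∑ m ∈ range (s * N), G m 0 + ∑ i ∈ range s, G (s * N + i) 0 := by
      rw [Nat.mul_succ, Finset.sum_range_add]
    have hdiff : ∀ k, F (s * (N + 1)) k - F (s * N) k
        = ∑ i ∈ range s, (G (s * N + i) (k + 1) - G (s * N + i) k) := by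
      intro k
      have := Finset.sum_range_sub (fun i => F (s * N + i) k) s
      have h2 : ∑ i ∈ range s, (F (s * N + i + 1) k - F (s * N + i) k)
          = F (s * (N + 1)) k - F (s * N) k := by
        simpa [Nat.mul_succ, add_assoc] using this
      rw [← h2]
      exact Finset.sum_congr rfl fun i _ => hWZ (s * N + i) k
    have h3 : ∑ k ∈ range N, (F (s * (N + 1)) k - F (s * N) k)
        = ∑ i ∈ range s, (G (s * N + i) N - G (s * N + i) 0) := by
      rw [Finset.sum_congr rfl fun k _ => hdiff k, Finset.sum_comm]
      exact Finset.sum_congr rfl fun i _ =>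
        Finset.sum_range_sub (fun k => G (s * N + i) k) N
    rw [Finset.sum_range_succ, ih, h1, Finset.sum_range_succ]
    have h4 : ∑ k ∈ range N, F (s * (N + 1)) k
        = ∑ k ∈ range N, F (s * N) k
          + ∑ i ∈ range s, (G (s * N + i) N - G (s * N + i) 0) := by
      rw [← h3, Finset.sum_sub_distrib]; ring
    rw [h4, Finset.sum_sub_distrib]
    ring

theorem wz_formula_one (F G : ℕ → ℕ → ℝ)
    (hWZ : ∀ n k, F (n + 1) k - F n k = G n (k + 1) - G n k)
    (s : ℕ) (hs : 1 ≤ s) (S₁ S₂ L : ℝ)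
    (h₁ : HasSum (fun n : ℕ => G n 0) S₁)
    (h₂ : HasSum (fun n : ℕ =>
      F (s * (n + 1)) n + ∑ i ∈ Finset.range s, G (s * n + i) n) S₂)
    (hL : Filter.Tendsto (fun n : ℕ => ∑ k ∈ Finset.range n, F (s * n) k)
      Filter.atTop (nhds L)) :
    S₁ = S₂ - L := by
  have hA := h₁.tendsto_sum_nat
  have hB := h₂.tendsto_sum_nat
  have hs' : Tendsto (fun N : ℕ => s * N) atTop atTop := by
    apply tendsto_atTop_mono (fun n => ?_) tendsto_id
    calc (n : ℕ) = 1 * n := (one_mul n).symm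
    _ ≤ s * n := Nat.mul_le_mul_right n hs
  have hAc : Tendsto (fun N : ℕ => ∑ m ∈ range (s * N), G m 0) atTop (nhds S₁) :=
    hA.comp hs'
  have hsum : Tendsto (fun N : ℕ => (∑ m ∈ range (s * N), G m 0)
      + ∑ k ∈ range N, F (s * N) k) atTop (nhds (S₁ + L)) := hAc.add hL
  have heq : (fun N : ℕ => ∑ n ∈ range N,
      (F (s * (n + 1)) n + ∑ i ∈ range s, G (s * n + i) n))
      = fun N : ℕ => (∑ m ∈ range (s * N), G m 0) + ∑ k ∈ range N, F (s * N) k :=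
    funext (wz_key F G hWZ s)
  rw [heq] at hB
  have := tendsto_nhds_unique hB hsum
  linarith
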